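/- Fix a > 0 and let Θ(r) = A(r)/(2π(cosh r - 1)) where A(r) = ∫ₐʳ 4π·sinh(t)·sinh(2t)/√(sinh²(2t)-sinh²(2a)) dt is the area of the compact catenoid portion Σ_{a,r}. Then Θ has a finite limit as r → ∞. -/

import Mathlib

open Real Filter

noncomputable def A (a r : ℝ) : ℝ :=
  ∫ t in a..r,
    4 * π * Real.sinh t * Real.sinh (2 * t) /
      Real.sqrt (Real.sinh (2 * t) ^ 2 - Real.sinh (2 * a) ^ 2)

open MeasureTheory Set Topology

-- sinh difference lower bound
lemma sinh_diff_le {u v : ℝ} (hv : 0 ≤ v) (huv : v ≤ u) :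
    u - v ≤ Real.sinh u - Real.sinh v := by
  have h1 : Real.sinh u = Real.sinh v * Real.cosh (u - v) + Real.cosh v * Real.sinh (u - v) := by
    rw [← Real.sinh_add]; ring_nf
  nlinarith [Real.one_le_cosh (u - v), Real.one_le_cosh v,
    Real.self_le_sinh_iff.mpr (sub_nonneg.mpr huv),
    Real.sinh_nonneg_iff.mpr hv, sub_nonneg.mpr huv]

lemma denom_lb {a t : ℝ} (ha : 0 < a) (hat : a ≤ t) :
    4 * Real.sinh (2 * a) * (t - a) ≤ Real.sinh (2 * t) ^ 2 - Real.sinh (2 * a) ^ 2 := by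
  have h1 : 2 * t - 2 * a ≤ Real.sinh (2 * t) - Real.sinh (2 * a) :=
    sinh_diff_le (by linarith) (by linarith)
  have h2 : Real.sinh (2 * a) ≤ Real.sinh (2 * t) := Real.sinh_le_sinh.mpr (by linarith)
  have h3 : 0 < Real.sinh (2 * a) := Real.sinh_pos_iff.mpr (by linarith)
  nlinarith [mul_le_mul h1 (by linarith : 2 * Real.sinh (2*a) ≤ Real.sinh (2*t) + Real.sinh (2*a)) (by linarith) (by linarith)]

noncomputable def gg (a t : ℝ) : ℝ :=
  4 * π * Real.sinh t * Real.sinh (2 * t) /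
    Real.sqrt (Real.sinh (2 * t) ^ 2 - Real.sinh (2 * a) ^ 2)

noncomputable def ff (a t : ℝ) : ℝ := gg a t - 4 * π * Real.sinh t

lemma denom_pos {a t : ℝ} (ha : 0 < a) (hat : a < t) :
    0 < Real.sinh (2 * t) ^ 2 - Real.sinh (2 * a) ^ 2 := by
  have h3 : 0 < Real.sinh (2 * a) := Real.sinh_pos_iff.mpr (by linarith)
  calc (0:ℝ) < 4 * Real.sinh (2*a) * (t - a) :=
    mul_pos (by positivity) (sub_pos.mpr hat)
  _ ≤ _ := denom_lb ha hat.le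

lemma contOn_gg {a : ℝ} (ha : 0 < a) : ContinuousOn (gg a) (Ioi a) := by
  apply ContinuousOn.div
  · fun_prop
  · fun_prop
  · intro t ht
    exact (Real.sqrt_pos.mpr (denom_pos ha ht)).ne'

lemma gg_nonneg {a t : ℝ} (ha : 0 < a) (hat : a < t) : 0 ≤ gg a t := by
  have h0 : (0:ℝ) < t := lt_trans ha hat
  have := Real.sinh_nonneg_iff.mpr h0.le
  have := Real.sinh_nonneg_iff.mpr (by linarith : (0:ℝ) ≤ 2*t)
  have := Real.pi_pos
  unfold gg
  positivity

lemma sqrt_denom_lb {a t : ℝ} (ha : 0 < a) (hat : a ≤ t) :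
    2 * Real.sqrt (Real.sinh (2*a)) * Real.sqrt (t - a)
      ≤ Real.sqrt (Real.sinh (2 * t) ^ 2 - Real.sinh (2 * a) ^ 2) := by
  have h3 : 0 < Real.sinh (2 * a) := Real.sinh_pos_iff.mpr (by linarith)
  have key : 2 * Real.sqrt (Real.sinh (2*a)) * Real.sqrt (t - a)
      = Real.sqrt (4 * Real.sinh (2*a) * (t - a)) := by
    rw [Real.sqrt_mul (by positivity), Real.sqrt_mul (by norm_num)]
    rw [show (4:ℝ) = 2^2 by norm_num, Real.sqrt_sq (by norm_num)]
  rw [key]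
  exact Real.sqrt_le_sqrt (denom_lb ha hat)

lemma rpow_int : IntervalIntegrable (fun x : ℝ => x ^ (-(1/2) : ℝ)) volume 0 1 :=
  intervalIntegral.intervalIntegrable_rpow' (by norm_num)

lemma bound_int (a : ℝ) :
    IntegrableOn (fun t : ℝ => (t - a) ^ (-(1/2) : ℝ)) (Ioc a (a+1)) volume := by
  have h := rpow_int.comp_sub_right a
  rw [zero_add, add_comm 1 a] at h
  exact (intervalIntegrable_iff_integrableOn_Ioc_of_le (by linarith)).mp h

lemma gg_int_near {a : ℝ} (ha : 0 < a) : IntegrableOn (gg a) (Ioc a (a+1)) volume := by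
  set S := Real.sinh (2*a) with hS
  have hS0 : 0 < S := Real.sinh_pos_iff.mpr (by linarith)
  set M := 4 * π * Real.sinh (a+1) * Real.sinh (2*(a+1)) / (2 * Real.sqrt S) with hM
  have hM0 : 0 ≤ M := by
    have := Real.pi_pos
    have := Real.sinh_nonneg_iff.mpr (by linarith : (0:ℝ) ≤ a+1)
    have := Real.sinh_nonneg_iff.mpr (by linarith : (0:ℝ) ≤ 2*(a+1))
    positivity
  apply Integrable.mono' ((bound_int a).const_mul M)
  · exact ((contOn_gg ha).mono Ioc_subset_Ioi_self).aestronglyMeasurable measurableSet_Ioc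
  · rw [ae_restrict_iff' measurableSet_Ioc]
    refine ae_of_all _ fun t ht => ?_
    obtain ⟨ht1, ht2⟩ := ht
    have ht0 : 0 < t := lt_trans ha ht1
    rw [Real.norm_of_nonneg (gg_nonneg ha ht1)]
    have hnum : 4 * π * Real.sinh t * Real.sinh (2*t)
        ≤ 4 * π * Real.sinh (a+1) * Real.sinh (2*(a+1)) := by
      have h1 : Real.sinh t ≤ Real.sinh (a+1) := Real.sinh_le_sinh.mpr ht2
      have h2 : Real.sinh (2*t) ≤ Real.sinh (2*(a+1)) := Real.sinh_le_sinh.mpr (by linarith)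
      have h3 : 0 ≤ Real.sinh t := Real.sinh_nonneg_iff.mpr ht0.le
      have h4 : 0 ≤ Real.sinh (2*t) := Real.sinh_nonneg_iff.mpr (by linarith)
      have := Real.pi_pos
      have h5 : 0 ≤ Real.sinh (a+1) := le_trans h3 h1
      nlinarith [mul_le_mul h1 h2 h4 h5]
    have hden : 2 * Real.sqrt S * Real.sqrt (t - a)
        ≤ Real.sqrt (Real.sinh (2*t)^2 - S^2) := sqrt_denom_lb ha ht1.le
    have hdpos : 0 < 2 * Real.sqrt S * Real.sqrt (t - a) := by
      have : 0 < t - a := sub_pos.mpr ht1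
      positivity
    have hnum0 : 0 ≤ 4 * π * Real.sinh (a+1) * Real.sinh (2*(a+1)) := by
      have := Real.pi_pos
      have := Real.sinh_nonneg_iff.mpr (by linarith : (0:ℝ) ≤ a+1)
      have := Real.sinh_nonneg_iff.mpr (by linarith : (0:ℝ) ≤ 2*(a+1))
      positivity
    calc gg a t ≤ (4 * π * Real.sinh (a+1) * Real.sinh (2*(a+1)))
          / (2 * Real.sqrt S * Real.sqrt (t - a)) :=
        div_le_div₀ hnum0 hnum hdpos hden
      _ = M * (t - a) ^ (-(1/2) : ℝ) := by
        rw [Real.rpow_neg (by linarith : (0:ℝ) ≤ t - a), ← Real.sqrt_eq_rpow, hM]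
        have hst : 0 < Real.sqrt (t - a) := Real.sqrt_pos.mpr (by linarith)
        have hsS : 0 < Real.sqrt S := Real.sqrt_pos.mpr hS0
        field_simp

lemma ff_nonneg {a t : ℝ} (ha : 0 < a) (hat : a < t) : 0 ≤ ff a t := by
  have ht0 : 0 < t := lt_trans ha hat
  have hx0 : 0 < Real.sinh (2*t) := Real.sinh_pos_iff.mpr (by linarith)
  have hD : 0 < Real.sinh (2*t)^2 - Real.sinh (2*a)^2 := denom_pos ha hat
  have hd0 : 0 < Real.sqrt (Real.sinh (2*t)^2 - Real.sinh (2*a)^2) := Real.sqrt_pos.mpr hD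
  have hdx : Real.sqrt (Real.sinh (2*t)^2 - Real.sinh (2*a)^2) ≤ Real.sinh (2*t) := by
    calc Real.sqrt (Real.sinh (2*t)^2 - Real.sinh (2*a)^2)
        ≤ Real.sqrt (Real.sinh (2*t)^2) := Real.sqrt_le_sqrt (by nlinarith [Real.sinh_pos_iff.mpr (show (0:ℝ) < 2*a by linarith)])
      _ = Real.sinh (2*t) := Real.sqrt_sq hx0.le
  have hsinh : 0 ≤ Real.sinh t := Real.sinh_nonneg_iff.mpr ht0.le
  have hpi := Real.pi_pos
  have key : 4 * π * Real.sinh t ≤ gg a t := by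
    unfold gg
    rw [le_div_iff₀ hd0]
    nlinarith [mul_le_mul_of_nonneg_left hdx (by positivity : (0:ℝ) ≤ 4*π*Real.sinh t)]
  simpa [ff, sub_nonneg] using key

lemma ff_int_tail {a : ℝ} (ha : 0 < a) : IntegrableOn (ff a) (Ioi (a+1)) volume := by
  set S := Real.sinh (2*a) with hS
  have hS0 : 0 < S := Real.sinh_pos_iff.mpr (by linarith)
  set C := 2 * π * S^2 / Real.sqrt S with hC
  have hC0 : 0 ≤ C := by have := Real.pi_pos; positivity
  have hint : IntegrableOn (fun t : ℝ => C * Real.exp (-t)) (Ioi (a+1)) volume := by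
    have := (exp_neg_integrableOn_Ioi (a+1) (one_pos)).const_mul C
    simp only [neg_one_mul] at this
    exact this
  apply Integrable.mono' hint
  · have hcont : ContinuousOn (ff a) (Ioi a) :=
      (contOn_gg ha).sub (by fun_prop)
    exact (hcont.mono fun t ht => lt_trans (by linarith) ht).aestronglyMeasurable
      measurableSet_Ioi
  · rw [ae_restrict_iff' measurableSet_Ioi]
    refine ae_of_all _ fun t ht => ?_
    rw [mem_Ioi] at ht
    have hat : a < t := by linarith
    have ht0 : 0 < t := lt_trans ha hat
    rw [Real.norm_of_nonneg (ff_nonneg ha hat)]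
    set x := Real.sinh (2*t) with hx
    set d := Real.sqrt (x^2 - S^2) with hd
    have hx0 : 0 < x := Real.sinh_pos_iff.mpr (by linarith)
    have hD : 0 < x^2 - S^2 := denom_pos ha hat
    have hd0 : 0 < d := Real.sqrt_pos.mpr hD
    have hd2 : d^2 = x^2 - S^2 := Real.sq_sqrt hD.le
    have hdx : d ≤ x := by
      nlinarith
    have hsq : 2 * Real.sqrt S ≤ d := by
      have h1 : Real.sqrt 1 ≤ Real.sqrt (t - a) :=
        Real.sqrt_le_sqrt (show (1:ℝ) ≤ t - a by linarith)
      rw [Real.sqrt_one] at h1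
      calc 2 * Real.sqrt S = 2 * Real.sqrt S * 1 := by ring
        _ ≤ 2 * Real.sqrt S * Real.sqrt (t - a) := by
            have := Real.sqrt_nonneg S; nlinarith
        _ ≤ d := sqrt_denom_lb ha hat.le
    have hsinh : 0 < Real.sinh t := Real.sinh_pos_iff.mpr ht0
    have hcosh : 0 < Real.cosh t := Real.cosh_pos t
    have hpi := Real.pi_pos
    have hx2 : x = 2 * Real.sinh t * Real.cosh t := Real.sinh_two_mul t
    -- ff a t = 4π sinh t (x - d)/d
    have hff : ff a t = 4 * π * Real.sinh t * (x - d) / d := by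
      unfold ff gg
      rw [← hx, ← hd]
      field_simp
    -- (x - d) ≤ S^2 / x
    have hstep : (x - d) / d ≤ S^2 / (x * (2 * Real.sqrt S)) := by
      have h1 : (x - d) / d ≤ S^2 / (x * d) := by
        rw [div_le_div_iff₀ hd0 (by positivity)]
        nlinarith [mul_le_mul_of_nonneg_left hdx hd0.le]
      have h2 : S^2 / (x * d) ≤ S^2 / (x * (2 * Real.sqrt S)) := by
        apply div_le_div_of_nonneg_left (by positivity) (by positivity)
        gcongr
      linarith
    have hub : ff a t ≤ 4 * π * Real.sinh t * (S^2 / (x * (2 * Real.sqrt S))) := by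
      rw [hff, mul_div_assoc]
      gcongr
    have hsimp : 4 * π * Real.sinh t * (S^2 / (x * (2 * Real.sqrt S)))
        = π * S^2 / (Real.sqrt S * Real.cosh t) := by
      rw [hx2]
      have hsS : 0 < Real.sqrt S := Real.sqrt_pos.mpr hS0
      field_simp
      ring
    have hfin2 : True := trivial
    have hfin : π * S^2 / (Real.sqrt S * Real.cosh t) ≤ C * Real.exp (-t) := by
      have hsS : 0 < Real.sqrt S := Real.sqrt_pos.mpr hS0
      have he : 0 < Real.exp t := Real.exp_pos t
      have hexp2 : Real.exp t / 2 ≤ Real.cosh t := by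
        rw [Real.cosh_eq]
        have := Real.exp_pos (-t)
        linarith
      have e1 : π * S^2 / (Real.sqrt S * Real.cosh t)
          ≤ π * S^2 / (Real.sqrt S * (Real.exp t / 2)) := by
        apply div_le_div_of_nonneg_left (by positivity) (by positivity)
        gcongr
      have e2 : π * S^2 / (Real.sqrt S * (Real.exp t / 2)) = C * Real.exp (-t) := by
        rw [hC, Real.exp_neg]
        field_simp
      linarith
    calc ff a t ≤ _ := hub
      _ = _ := hsimp
      _ ≤ _ := hfin

lemma ff_int {a : ℝ} (ha : 0 < a) : IntegrableOn (ff a) (Ioi a) volume := by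
  have hsplit : Ioc a (a+1) ∪ Ioi (a+1) = Ioi a := Ioc_union_Ioi_eq_Ioi (by linarith)
  rw [← hsplit]
  refine IntegrableOn.union ?_ (ff_int_tail ha)
  have hh : IntegrableOn (fun t => 4 * π * Real.sinh t) (Ioc a (a+1)) volume :=
    (Continuous.integrableOn_Ioc (by fun_prop))
  exact (gg_int_near ha).sub hh

lemma integral_h (a r : ℝ) :
    ∫ t in a..r, 4 * π * Real.sinh t = 4 * π * (Real.cosh r - Real.cosh a) := by
  have h1 : ∫ t in a..r, Real.sinh t = Real.cosh r - Real.cosh a :=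
    intervalIntegral.integral_eq_sub_of_hasDerivAt (fun t _ => Real.hasDerivAt_cosh t)
      (Real.continuous_sinh.intervalIntegrable a r)
  rw [intervalIntegral.integral_const_mul, h1]

lemma A_eq {a : ℝ} (ha : 0 < a) {r : ℝ} (hr : a ≤ r) :
    A a r = (∫ t in a..r, ff a t) + 4 * π * (Real.cosh r - Real.cosh a) := by
  have hf := ff_int ha
  have hhint : IntervalIntegrable (fun t => 4 * π * Real.sinh t) volume a r :=
    (by fun_prop : Continuous fun t => 4 * π * Real.sinh t).intervalIntegrable a r
  have hfint : IntervalIntegrable (ff a) volume a r :=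
    (intervalIntegrable_iff_integrableOn_Ioc_of_le hr).mpr (hf.mono_set Ioc_subset_Ioi_self)
  have hA : A a r = ∫ t in a..r, (ff a t + 4 * π * Real.sinh t) := by
    unfold A
    congr 1
    funext t
    simp [ff, gg]
  rw [hA, intervalIntegral.integral_add hfint hhint, integral_h]

theorem stmt_17 (a : ℝ) (ha : 0 < a) :
    ∃ L : ℝ, Tendsto (fun r => A a r / (2 * π * (Real.cosh r - 1))) atTop (nhds L) := by
  refine ⟨2, ?_⟩
  have hf := ff_int ha
  have hpi := Real.pi_pos
  have hT : Tendsto (fun r => ∫ t in a..r, ff a t) atTop (𝓝 (∫ t in Ioi a, ff a t)) :=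
    intervalIntegral_tendsto_integral_Ioi a hf tendsto_id
  have hcosh : Tendsto Real.cosh atTop atTop := by
    apply tendsto_atTop_mono (fun x => ?_) (tendsto_exp_atTop.atTop_div_const two_pos)
    rw [Real.cosh_eq]
    have := Real.exp_pos (-x)
    linarith
  have hD : Tendsto (fun r => 2 * π * (Real.cosh r - 1)) atTop atTop := by
    have h1 : Tendsto (fun r => Real.cosh r - 1) atTop atTop := by
      simpa [sub_eq_add_neg] using tendsto_atTop_add_const_right atTop (-1) hcosh
    exact h1.const_mul_atTop (by positivity)
  have T1 : Tendsto (fun r => (∫ t in a..r, ff a t) / (2 * π * (Real.cosh r - 1)))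
      atTop (𝓝 0) := hT.div_atTop hD
  have hφ : Tendsto (fun c : ℝ => (4 * π * c - 4 * π * Real.cosh a) / (2 * π * (c - 1)))
      atTop (𝓝 2) := by
    have h1 : Tendsto (fun c : ℝ => 4 * π - (4 * π * Real.cosh a) / c) atTop (𝓝 (4 * π - 0)) :=
      tendsto_const_nhds.sub (tendsto_const_nhds.div_atTop tendsto_id)
    have h2 : Tendsto (fun c : ℝ => 2 * π - (2 * π) / c) atTop (𝓝 (2 * π - 0)) :=
      tendsto_const_nhds.sub (tendsto_const_nhds.div_atTop tendsto_id)
    have h3 := h1.div h2 (by simp : (2 * π - 0 : ℝ) ≠ 0)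
    have h4 : (4 * π - 0) / (2 * π - 0) = (2:ℝ) := by
      field_simp
      ring
    rw [h4] at h3
    apply h3.congr'
    filter_upwards [eventually_ge_atTop (2:ℝ)] with c hc
    have hc0 : c ≠ 0 := by linarith
    have hc1 : c - 1 ≠ 0 := by linarith
    rw [Pi.div_apply]
    field_simp
  have T2 : Tendsto (fun r => (4 * π * Real.cosh r - 4 * π * Real.cosh a)
      / (2 * π * (Real.cosh r - 1))) atTop (𝓝 2) := hφ.comp hcosh
  have total := T1.add T2
  rw [zero_add] at total
  apply total.congr'
  filter_upwards [eventually_ge_atTop a] with r hr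
  rw [A_eq ha hr, add_div]
  ring_nf
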